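/- arXiv:1012.1578 — 2 statements merged into one kernel-verified Lean document; each statement's English description precedes it below -/
import Mathlib

section
/- The hyperspace C([0,∞)) of nonempty closed connected subsets of the ray [0,∞), equipped with the Vietoris topology, is path-connected. -/
open Set

/-- The hyperspace `C([0,∞))` of nonempty closed connected subsets of the ray
`[0,∞)`, viewed as subsets of `ℝ` contained in `[0,∞)`. -/
def CRay : Type := {A : Set ℝ // IsClosed A ∧ IsConnected A ∧ A ⊆ Ici (0:ℝ)}

/-- The Vietoris topology on `C([0,∞))`, generated by the subbasic sets
`U⁺ = {A : A ⊆ U}` and `V⁻ = {A : A ∩ V ≠ ∅}` for `U`, `V` open in `[0,∞)`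
(i.e. relatively open subsets of the ray). -/
instance : TopologicalSpace CRay :=
  TopologicalSpace.generateFrom
    ({S | ∃ U : Set ℝ, (∃ W : Set ℝ, IsOpen W ∧ U = W ∩ Ici 0) ∧
        S = {A : CRay | A.1 ⊆ U}} ∪
     {S | ∃ V : Set ℝ, (∃ W : Set ℝ, IsOpen W ∧ V = W ∩ Ici 0) ∧
        S = {A : CRay | (A.1 ∩ V).Nonempty}})

/-!
Every element of `C([0,∞))` is an interval `[a, b]` or a ray `[a, ∞)`. Compact intervals are
joined by moving their endpoints linearly: the Vietoris topology only sees that the moving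
interval stays inside a neighbourhood of the limit interval and comes close to each of its points.
A ray `[a, ∞)` is joined to `[a, a + 1]` through the intervals `[a, a + 1/c]`, `0 < c ≤ 1`:
as `c → 0` these stay inside `[a, ∞)` and eventually contain any given point of it.
So everything is joined to `{0}`.
-/

open Filter Topology

section IntervalLimits

variable {α β : Type*} [LinearOrder β] [TopologicalSpace β] [OrderTopology β]
  {l : Filter α} {f g : α → β} {a b : β} {W : Set β}

theorem Filter.Tendsto.eventually_Icc_subset (hf : Tendsto f l (𝓝 a)) (hg : Tendsto g l (𝓝 b))
    (hW : IsOpen W) (hab : a ≤ b) (h : Icc a b ⊆ W) : ∀ᶠ x in l, Icc (f x) (g x) ⊆ W := by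
  have hleft : ∀ᶠ x in l, Icc (f x) a ⊆ W :=
    (hf.Icc tendsto_const_nhds).eventually
      (eventually_smallSets_subset.2 (hW.mem_nhds (h (left_mem_Icc.2 hab))))
  have hright : ∀ᶠ x in l, Icc b (g x) ⊆ W :=
    (tendsto_const_nhds.Icc hg).eventually
      (eventually_smallSets_subset.2 (hW.mem_nhds (h (right_mem_Icc.2 hab))))
  filter_upwards [hleft, hright] with x hfx hgx
  calc Icc (f x) (g x) ⊆ Icc (f x) a ∪ (Icc a b ∪ Icc b (g x)) :=
        Icc_subset_Icc_union_Icc.trans (union_subset_union_right _ Icc_subset_Icc_union_Icc)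
    _ ⊆ W := union_subset hfx (union_subset h hgx)

theorem Filter.Tendsto.eventually_Icc_inter_nonempty (hf : Tendsto f l (𝓝 a))
    (hg : Tendsto g l (𝓝 b)) (hfg : ∀ᶠ x in l, f x ≤ g x) (hW : IsOpen W)
    (h : (Icc a b ∩ W).Nonempty) : ∀ᶠ x in l, (Icc (f x) (g x) ∩ W).Nonempty := by
  obtain ⟨p, ⟨hap, hpb⟩, hpW⟩ := h
  -- the projection of `p` onto `Icc (f x) (g x)` tends to `p`
  have hproj : Tendsto (fun x => max (f x) (min p (g x))) l (𝓝 p) := by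
    have := hf.max ((tendsto_const_nhds (x := p)).min hg)
    rwa [min_eq_left hpb, max_eq_right hap] at this
  filter_upwards [hproj (hW.mem_nhds hpW), hfg] with x hxW hle
  exact ⟨_, ⟨le_max_left _ _, max_le hle (min_le_right _ _)⟩, hxW⟩

end IntervalLimits

namespace CRay

variable {α : Type*} {l : Filter α}

def icc (a b : ℝ) (ha : 0 ≤ a) (hab : a ≤ b) : CRay :=
  ⟨Icc a b, isClosed_Icc, isConnected_Icc hab, fun _ hx => ha.trans hx.1⟩

def ici (a : ℝ) (ha : 0 ≤ a) : CRay :=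
  ⟨Ici a, isClosed_Ici, isConnected_Ici, fun _ hx => ha.trans hx⟩

theorem eq_icc_or_eq_ici (A : CRay) :
    (∃ a b ha hab, A = icc a b ha hab) ∨ ∃ a ha, A = ici a ha := by
  obtain ⟨S, hcl, hconn, hsub⟩ := A
  have hbdd : BddBelow S := ⟨0, fun _ hx => hsub hx⟩
  have hinf : sInf S ∈ S := hcl.csInf_mem hconn.nonempty hbdd
  by_cases hbdd' : BddAbove S
  · exact .inl ⟨_, _, hsub hinf, csInf_le_csSup hconn.nonempty hbdd hbdd',
      Subtype.ext (eq_Icc_csInf_csSup_of_connected_bdd_closed hconn hbdd hbdd' hcl)⟩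
  · refine .inr ⟨_, hsub hinf, Subtype.ext ?_⟩
    change S = Ici (sInf S)
    refine Subset.antisymm (fun _ hx => csInf_le hbdd hx) ?_
    rw [← Ioi_insert]
    exact insert_subset hinf (hconn.isPreconnected.Ioi_csInf_subset hbdd hbdd')

-- Every element of `CRay` lies in the ray, so relatively open subsets of the ray can be
-- replaced by open subsets of `ℝ`.
theorem tendsto_nhds_of_forall_isOpen {F : α → CRay} {A : CRay}
    (hupper : ∀ W, IsOpen W → A.1 ⊆ W → ∀ᶠ x in l, (F x).1 ⊆ W)
    (hlower : ∀ W, IsOpen W → (A.1 ∩ W).Nonempty → ∀ᶠ x in l, ((F x).1 ∩ W).Nonempty) :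
    Tendsto F l (𝓝 A) := by
  refine TopologicalSpace.tendsto_nhds_generateFrom_iff.2 ?_
  rintro s (⟨U, ⟨W, hW, rfl⟩, rfl⟩ | ⟨V, ⟨W, hW, rfl⟩, rfl⟩) hA
  · filter_upwards [hupper W hW (hA.trans inter_subset_left)] with x hx
    exact subset_inter hx (F x).2.2.2
  · obtain ⟨p, hpA, hpW, -⟩ := hA
    filter_upwards [hlower W hW ⟨p, hpA, hpW⟩] with x ⟨q, hq, hqW⟩
    exact ⟨q, hq, hqW, (F x).2.2.2 hq⟩

theorem tendsto_icc {f g : α → ℝ} {a b : ℝ}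
    (hf0 : ∀ x, 0 ≤ f x) (hfg : ∀ x, f x ≤ g x) (ha : 0 ≤ a) (hab : a ≤ b)
    (hf : Tendsto f l (𝓝 a)) (hg : Tendsto g l (𝓝 b)) :
    Tendsto (fun x => icc (f x) (g x) (hf0 x) (hfg x)) l (𝓝 (icc a b ha hab)) :=
  tendsto_nhds_of_forall_isOpen (fun _ hW h => hf.eventually_Icc_subset hg hW hab h)
    (fun _ hW h => hf.eventually_Icc_inter_nonempty hg (.of_forall hfg) hW h)

theorem joined_icc_icc {a b c d : ℝ} (ha : 0 ≤ a) (hab : a ≤ b) (hc : 0 ≤ c) (hcd : c ≤ d) :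
    Joined (icc a b ha hab) (icc c d hc hcd) := by
  have hf0 (t : unitInterval) : 0 ≤ (1 - t) * a + t * c :=
    add_nonneg (mul_nonneg (unitInterval.one_minus_nonneg t) ha) (mul_nonneg t.2.1 hc)
  have hfg (t : unitInterval) : (1 - t) * a + t * c ≤ (1 - t) * b + t * d :=
    add_le_add (mul_le_mul_of_nonneg_left hab (unitInterval.one_minus_nonneg t))
      (mul_le_mul_of_nonneg_left hcd t.2.1)
  refine ⟨{ toFun := fun t => icc _ _ (hf0 t) (hfg t), continuous_toFun := ?_,
            source' := ?_, target' := ?_ }⟩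
  · exact continuous_iff_continuousAt.2 fun t =>
      tendsto_icc hf0 hfg _ _ ((by fun_prop : Continuous fun t : unitInterval => _).tendsto t)
        ((by fun_prop : Continuous fun t : unitInterval => _).tendsto t)
  · exact Subtype.ext (by simp)
  · exact Subtype.ext (by simp)

/-- `Ici a` cut off at `a + c⁻¹`; for `c = 0` nothing is cut off. -/
def cutIci (a c : ℝ) : Set ℝ := {x | a ≤ x ∧ c * (x - a) ≤ 1}

theorem cutIci_zero (a : ℝ) : cutIci a 0 = Ici a := by
  ext x; simp [cutIci]

theorem cutIci_of_pos (a : ℝ) {c : ℝ} (hc : 0 < c) : cutIci a c = Icc a (a + c⁻¹) := by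
  ext x
  simp only [cutIci, mem_ofPred_eq, mem_Icc, ← le_div_iff₀' hc, one_div, sub_le_iff_le_add']

theorem cutIci_subset_Ici (a c : ℝ) : cutIci a c ⊆ Ici a := fun _ hx => hx.1

theorem cutIci_mem {a c : ℝ} (ha : 0 ≤ a) (hc : 0 ≤ c) :
    IsClosed (cutIci a c) ∧ IsConnected (cutIci a c) ∧ cutIci a c ⊆ Ici 0 := by
  rcases hc.eq_or_lt with rfl | hc
  · exact cutIci_zero a ▸ (ici a ha).2
  · have : a ≤ a + c⁻¹ := le_add_of_nonneg_right (inv_nonneg.2 hc.le)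
    exact cutIci_of_pos a hc ▸ (icc a _ ha this).2

def cut (a c : ℝ) (ha : 0 ≤ a) (hc : 0 ≤ c) : CRay := ⟨cutIci a c, cutIci_mem ha hc⟩

theorem cut_zero {a : ℝ} (ha : 0 ≤ a) : cut a 0 ha le_rfl = ici a ha :=
  Subtype.ext (cutIci_zero a)

theorem cut_of_pos {a c : ℝ} (ha : 0 ≤ a) (hc : 0 < c) :
    cut a c ha hc.le = icc a (a + c⁻¹) ha (le_add_of_nonneg_right (inv_nonneg.2 hc.le)) :=
  Subtype.ext (cutIci_of_pos a hc)

variable {a : ℝ} {c : α → ℝ}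

theorem tendsto_cut_zero (ha : 0 ≤ a) (hc0 : ∀ x, 0 ≤ c x) (hc : Tendsto c l (𝓝 0)) :
    Tendsto (fun x => cut a (c x) ha (hc0 x)) l (𝓝 (ici a ha)) := by
  refine tendsto_nhds_of_forall_isOpen (fun W _ h => .of_forall fun x => ?_)
    fun W _ ⟨p, hp, hpW⟩ => ?_
  · exact (cutIci_subset_Ici a _).trans h
  · have hlim : Tendsto (fun x => c x * (p - a)) l (𝓝 0) := by
      simpa using hc.mul_const (p - a)
    filter_upwards [hlim.eventually (eventually_lt_nhds zero_lt_one)] with x hx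
    exact ⟨p, ⟨hp, hx.le⟩, hpW⟩

theorem tendsto_cut_of_pos {c₀ : ℝ} (ha : 0 ≤ a) (hc0 : ∀ x, 0 ≤ c x) (hc₀ : 0 < c₀)
    (hc : Tendsto c l (𝓝 c₀)) :
    Tendsto (fun x => cut a (c x) ha (hc0 x)) l (𝓝 (cut a c₀ ha hc₀.le)) := by
  rw [cut_of_pos ha hc₀]
  refine (tendsto_icc (fun _ => ha) (fun x => le_add_of_nonneg_right (inv_nonneg.2 (hc0 x))) ha _
    tendsto_const_nhds (tendsto_const_nhds.add (hc.inv₀ hc₀.ne'))).congr' ?_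
  filter_upwards [hc.eventually (eventually_gt_nhds hc₀)] with x hx
  exact (cut_of_pos ha hx).symm

theorem joined_ici_icc (ha : 0 ≤ a) :
    Joined (ici a ha) (icc a (a + 1) ha (le_add_of_nonneg_right zero_le_one)) := by
  have hF : Continuous fun t : unitInterval => cut a t ha t.2.1 := by
    refine continuous_iff_continuousAt.2 fun t => ?_
    rcases t.2.1.eq_or_lt with ht | ht
    · obtain rfl : t = 0 := Subtype.ext ht.symm
      simpa only [ContinuousAt, Set.Icc.coe_zero, cut_zero] using
        tendsto_cut_zero ha (fun s : unitInterval => s.2.1) (continuous_subtype_val.tendsto 0)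
    · exact tendsto_cut_of_pos ha (fun s : unitInterval => s.2.1) ht
        continuous_subtype_val.continuousAt
  refine ⟨{ toFun := _, continuous_toFun := hF, source' := cut_zero ha, target' := ?_ }⟩
  simpa only [Set.Icc.coe_one, inv_one] using cut_of_pos ha one_pos

theorem joined_icc_zero (A : CRay) : Joined A (icc 0 0 le_rfl le_rfl) := by
  rcases A.eq_icc_or_eq_ici with ⟨a, b, ha, hab, rfl⟩ | ⟨a, ha, rfl⟩
  · exact joined_icc_icc ha hab le_rfl le_rfl
  · exact (joined_ici_icc ha).trans (joined_icc_icc ha _ le_rfl le_rfl)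

end CRay

/-- The hyperspace `C([0,∞))` with the Vietoris topology is path-connected. -/
theorem stmt_16 : PathConnectedSpace CRay :=
  ⟨⟨CRay.icc 0 0 le_rfl le_rfl⟩, fun A B =>
    (CRay.joined_icc_zero A).trans (CRay.joined_icc_zero B).symm⟩
end

section
/- The hyperspace C(ℝ) of nonempty closed connected subsets of ℝ, equipped with the Vietoris topology, is path-connected (in contrast to the Hausdorff metric topology, under which it has 4 path components). -/
open Set

/-- The hyperspace `C(ℝ)` of nonempty closed connected subsets of `ℝ`. -/
def CReal : Type := {A : Set ℝ // IsClosed A ∧ IsConnected A}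

/-- The Vietoris topology on `C(ℝ)`, generated by the subbasic sets
`U⁺ = {A : A ⊆ U}` and `V⁻ = {A : A ∩ V ≠ ∅}` for `U`, `V` open in `ℝ`. -/
instance : TopologicalSpace CReal :=
  TopologicalSpace.generateFrom
    ({S | ∃ U : Set ℝ, IsOpen U ∧ S = {A : CReal | A.1 ⊆ U}} ∪
     {S | ∃ V : Set ℝ, IsOpen V ∧ S = {A : CReal | (A.1 ∩ V).Nonempty}})

namespace CRealProof

noncomputable def g (t : ℝ) : ℝ := t / (1 - t)

lemma g_nonneg {t : ℝ} (h0 : 0 ≤ t) (h1 : t < 1) : 0 ≤ g t :=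
  div_nonneg h0 (by linarith)

lemma g_lt_iff {t c : ℝ} (h1 : t < 1) (hc : 0 ≤ c) : g t < c ↔ t < c / (1 + c) := by
  unfold g
  rw [div_lt_iff₀ (by linarith), lt_div_iff₀ (by linarith : (0:ℝ) < 1 + c)]
  constructor <;> intro h <;> nlinarith

lemma lt_g_iff {t c : ℝ} (h1 : t < 1) (hc : 0 ≤ c) : c < g t ↔ c / (1 + c) < t := by
  unfold g
  rw [lt_div_iff₀ (by linarith), div_lt_iff₀ (by linarith : (0:ℝ) < 1 + c)]
  constructor <;> intro h <;> nlinarith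

lemma frac_lt_one {c : ℝ} (hc : 0 ≤ c) : c / (1 + c) < 1 :=
  (div_lt_one (by linarith)).mpr (by linarith)

/-- The top element: the whole line. -/
noncomputable def top : CReal := ⟨univ, isClosed_univ, isConnected_univ⟩

/-- The growing path from `A` to the whole line. -/
noncomputable def grow (A : CReal) (p : ℝ) (hp : p ∈ A.1) (t : unitInterval) : CReal :=
  if h : (t : ℝ) = 1 then top
  else
    ⟨A.1 ∪ Icc (p - g t) (p + g t),
      A.2.1.union isClosed_Icc,
      A.2.2.union
        ⟨p, hp, by
          have hg := g_nonneg t.2.1 (lt_of_le_of_ne t.2.2 h)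
          exact ⟨by linarith, by linarith⟩⟩
        (isConnected_Icc (by
          have hg := g_nonneg t.2.1 (lt_of_le_of_ne t.2.2 h)
          linarith))⟩

lemma grow_of_eq {A : CReal} {p : ℝ} {hp : p ∈ A.1} {t : unitInterval}
    (h : (t : ℝ) = 1) : (grow A p hp t).1 = univ := by
  simp [grow, h, top]

lemma grow_of_ne {A : CReal} {p : ℝ} {hp : p ∈ A.1} {t : unitInterval}
    (h : (t : ℝ) ≠ 1) :
    (grow A p hp t).1 = A.1 ∪ Icc (p - g t) (p + g t) := by
  simp [grow, h]

lemma subset_grow (A : CReal) (p : ℝ) (hp : p ∈ A.1) (t : unitInterval) :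
    A.1 ⊆ (grow A p hp t).1 := by
  by_cases h : (t : ℝ) = 1
  · rw [grow_of_eq h]; exact subset_univ _
  · rw [grow_of_ne h]; exact subset_union_left

/-- Helper for the `V⁻` case: if we have a witness `v' ∈ V` at distance `≤ c` from `p`,
then the preimage of `V⁻` is a neighborhood of any `t` with `c/(1+c) < t`. -/
lemma mem_nhds_of_witness (A : CReal) (p : ℝ) (hp : p ∈ A.1) {V : Set ℝ} {v' c : ℝ}
    (hv' : v' ∈ V) (hc : 0 ≤ c) (hd : |v' - p| ≤ c) {t : unitInterval}
    (htc : c / (1 + c) < (t : ℝ)) :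
    {s : unitInterval | ((grow A p hp s).1 ∩ V).Nonempty} ∈ nhds t := by
  apply mem_nhds_iff.mpr
  refine ⟨{s : unitInterval | c / (1 + c) < (s : ℝ)}, ?_,
    isOpen_Ioi.preimage continuous_subtype_val, htc⟩
  intro s hs
  by_cases h1 : (s : ℝ) = 1
  · exact ⟨v', by rw [grow_of_eq h1]; trivial, hv'⟩
  · have hs1 : (s : ℝ) < 1 := lt_of_le_of_ne s.2.2 h1
    have hlt : c < g s := (lt_g_iff hs1 hc).mpr hs
    have habs := abs_le.mp hd
    refine ⟨v', ?_, hv'⟩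
    rw [grow_of_ne h1]
    exact Or.inr ⟨by linarith [habs.1], by linarith [habs.2]⟩

lemma grow_continuous (A : CReal) (p : ℝ) (hp : p ∈ A.1) :
    Continuous (grow A p hp) := by
  apply continuous_generateFrom_iff.mpr
  rintro s (⟨U, hU, rfl⟩ | ⟨V, hV, rfl⟩)
  · -- the U⁺ case
    rw [isOpen_iff_mem_nhds]
    intro t ht
    simp only [mem_preimage, mem_setOf_eq] at ht
    by_cases h1 : (t : ℝ) = 1
    · -- then U = univ and the preimage is everything
      have hU2 : U = univ := univ_subset_iff.mp (by rw [grow_of_eq h1] at ht; exact ht)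
      have hall : (Set.univ : Set unitInterval) ⊆
          (fun s => grow A p hp s) ⁻¹' {A : CReal | A.1 ⊆ U} := by
        intro s _
        simp only [mem_preimage, mem_setOf_eq, hU2]
        exact subset_univ _
      exact Filter.mem_of_superset Filter.univ_mem hall
    · have ht1 : (t : ℝ) < 1 := lt_of_le_of_ne t.2.2 h1
      rw [grow_of_ne h1] at ht
      set r := g (t : ℝ) with hrdef
      have hr : 0 ≤ r := g_nonneg t.2.1 ht1
      have hl : p - r ∈ U := ht (Or.inr ⟨le_refl _, by linarith⟩)
      have hrr : p + r ∈ U := ht (Or.inr ⟨by linarith, le_refl _⟩)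
      obtain ⟨δ1, hδ1, hball1⟩ := Metric.isOpen_iff.mp hU _ hl
      obtain ⟨δ2, hδ2, hball2⟩ := Metric.isOpen_iff.mp hU _ hrr
      set δ := min δ1 δ2 / 2 with hδdef
      have hδ : 0 < δ := by positivity
      have hδa : δ < δ1 := by
        have := min_le_left δ1 δ2; have := min_le_right δ1 δ2
        rw [hδdef]; linarith
      have hδb : δ < δ2 := by
        have := min_le_left δ1 δ2; have := min_le_right δ1 δ2
        rw [hδdef]; linarith
      have hbig : Icc (p - (r + δ)) (p + (r + δ)) ⊆ U := by
        intro x hx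
        rcases lt_or_ge x (p - r) with h | h
        · apply hball1
          rw [Metric.mem_ball, Real.dist_eq, abs_lt]
          exact ⟨by linarith [hx.1], by linarith⟩
        · rcases le_or_gt x (p + r) with h2 | h2
          · exact ht (Or.inr ⟨h, h2⟩)
          · apply hball2
            rw [Metric.mem_ball, Real.dist_eq, abs_lt]
            exact ⟨by linarith, by linarith [hx.2]⟩
      set c := r + δ with hcdef
      have hc : 0 ≤ c := by linarith
      apply mem_nhds_iff.mpr
      refine ⟨{s : unitInterval | (s : ℝ) < c / (1 + c)}, ?_,
        isOpen_Iio.preimage continuous_subtype_val, ?_⟩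
      · intro s hs
        have hs' : (s : ℝ) < c / (1 + c) := hs
        have hs1 : (s : ℝ) < 1 := lt_trans hs' (frac_lt_one hc)
        have hne : (s : ℝ) ≠ 1 := ne_of_lt hs1
        have hg' : g (s : ℝ) < c := (g_lt_iff hs1 hc).mpr hs'
        simp only [mem_preimage, mem_setOf_eq]
        rw [grow_of_ne hne]
        intro x hx
        rcases hx with hx | hx
        · exact ht (Or.inl hx)
        · exact hbig ⟨by linarith [hx.1], by linarith [hx.2]⟩
      · show (t : ℝ) < c / (1 + c)
        exact (g_lt_iff ht1 hc).mp (by rw [← hrdef]; linarith)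
  · -- the V⁻ case
    rw [isOpen_iff_mem_nhds]
    intro t ht
    simp only [mem_preimage, mem_setOf_eq] at ht ⊢
    by_cases hpV : p ∈ V
    · have hall : (Set.univ : Set unitInterval) ⊆
          (fun s => grow A p hp s) ⁻¹' {A : CReal | (A.1 ∩ V).Nonempty} := by
        intro s _
        exact ⟨p, subset_grow A p hp s hp, hpV⟩
      exact Filter.mem_of_superset Filter.univ_mem hall
    · obtain ⟨v, hv, hvV⟩ := ht
      by_cases hvA : v ∈ A.1
      · have hall : (Set.univ : Set unitInterval) ⊆
            (fun s => grow A p hp s) ⁻¹' {A : CReal | (A.1 ∩ V).Nonempty} := by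
          intro s _
          exact ⟨v, subset_grow A p hp s hvA, hvV⟩
        exact Filter.mem_of_superset Filter.univ_mem hall
      · by_cases h1 : (t : ℝ) = 1
        · exact mem_nhds_of_witness A p hp hvV (abs_nonneg _) (le_refl _)
            (by rw [h1]; exact frac_lt_one (abs_nonneg _))
        · have ht1 : (t : ℝ) < 1 := lt_of_le_of_ne t.2.2 h1
          rw [grow_of_ne h1] at hv
          have hIcc : v ∈ Icc (p - g t) (p + g t) := hv.resolve_left hvA
          set r := g (t : ℝ) with hrdef
          have hr : 0 ≤ r := g_nonneg t.2.1 ht1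
          have hvp : v ≠ p := fun h => hpV (h ▸ hvV)
          obtain ⟨δ, hδ, hball⟩ := Metric.isOpen_iff.mp hV _ hvV
          rcases lt_or_gt_of_ne hvp with hlt | hgt
          · -- v < p
            set v' := min p (v + δ / 2) with hv'def
            have hv'V : v' ∈ V := by
              apply hball
              rw [Metric.mem_ball, Real.dist_eq, abs_lt]
              constructor
              · have : v ≤ v' := le_min (le_of_lt hlt) (by linarith)
                linarith
              · have : v' ≤ v + δ / 2 := min_le_right _ _
                linarith
            have hv'lt : v' < p := by
              rcases le_or_gt p (v + δ / 2) with h | h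
              · have : v' = p := min_eq_left h
                -- then v' = p contradicts? no: v' = p means p ∈ V, contradiction
                exact absurd (this ▸ hv'V) hpV
              · have : v' = v + δ / 2 := min_eq_right (le_of_lt h)
                linarith
            set c := p - v' with hcdef
            have hc : 0 ≤ c := by linarith
            have hclt : c < r := by
              have h2 : v < v' := by
                rcases le_or_gt p (v + δ / 2) with h | h
                · rw [hv'def, min_eq_left h]; exact hlt
                · rw [hv'def, min_eq_right (le_of_lt h)]; linarith
              have h3 : p - r ≤ v := hIcc.1
              linarith
            have hd : |v' - p| ≤ c := by
              rw [abs_le]; constructor <;> [skip; skip] <;> rw [hcdef] <;> linarith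
            exact mem_nhds_of_witness A p hp hv'V hc hd
              ((lt_g_iff ht1 hc).mp (by rw [← hrdef]; exact hclt))
          · -- v > p
            set v' := max p (v - δ / 2) with hv'def
            have hv'V : v' ∈ V := by
              apply hball
              rw [Metric.mem_ball, Real.dist_eq, abs_lt]
              constructor
              · have : v - δ / 2 ≤ v' := le_max_right _ _
                linarith
              · have : v' ≤ v := max_le (le_of_lt hgt) (by linarith)
                linarith
            have hv'gt : p < v' := by
              rcases le_or_gt (v - δ / 2) p with h | h
              · have : v' = p := max_eq_left h
                exact absurd (this ▸ hv'V) hpV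
              · have : v' = v - δ / 2 := max_eq_right (le_of_lt h)
                linarith
            set c := v' - p with hcdef
            have hc : 0 ≤ c := by linarith
            have hclt : c < r := by
              have h2 : v' < v := by
                rcases le_or_gt (v - δ / 2) p with h | h
                · rw [hv'def, max_eq_left h]; exact hgt
                · rw [hv'def, max_eq_right (le_of_lt h)]; linarith
              have h3 : v ≤ p + r := hIcc.2
              linarith
            have hd : |v' - p| ≤ c := by
              rw [abs_le]; constructor <;> rw [hcdef] <;> linarith
            exact mem_nhds_of_witness A p hp hv'V hc hd
              ((lt_g_iff ht1 hc).mp (by rw [← hrdef]; exact hclt))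

lemma joined_top (A : CReal) : Joined A top := by
  obtain ⟨p, hp⟩ := A.2.2.nonempty
  refine ⟨⟨⟨grow A p hp, grow_continuous A p hp⟩, ?_, ?_⟩⟩
  · -- grow at 0 is A
    apply Subtype.ext
    have h0 : ((0 : unitInterval) : ℝ) = 0 := rfl
    have hne : ((0 : unitInterval) : ℝ) ≠ 1 := by rw [h0]; norm_num
    show (grow A p hp 0).1 = A.1
    rw [grow_of_ne hne, h0]
    have : g 0 = 0 := by simp [g]
    rw [this, sub_zero, add_zero, Icc_self]
    exact union_eq_left.mpr (singleton_subset_iff.mpr hp)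
  · -- grow at 1 is top
    apply Subtype.ext
    have h1 : ((1 : unitInterval) : ℝ) = 1 := rfl
    show (grow A p hp 1).1 = top.1
    rw [grow_of_eq h1]
    rfl

end CRealProof

/-- The hyperspace `C(ℝ)` of nonempty closed connected subsets of `ℝ`, equipped with
the Vietoris topology, is path-connected. -/
theorem stmt_18 : PathConnectedSpace CReal :=
  ⟨⟨CRealProof.top⟩, fun x y =>
    (CRealProof.joined_top x).trans (CRealProof.joined_top y).symm⟩
end
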